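/- Let z ∈ C¹(a,b) be a positive solution of ż = c g(u) − f(u) − h(u)/z^α on a maximal existence interval (a,b) ⊆ (0,1). Then the limits of z at a⁺ and at b⁻ exist and are finite. -/

import Mathlib

open Set Filter Topology Real

/-- A positive solution of `ż = c g(u) − f(u) − h(u)/z^α` on `(a,b) ⊆ (0,1)`
has finite limits at both endpoints. -/
theorem stmt_4 (α c : ℝ) (hα : 0 < α) (f g h : ℝ → ℝ)
    (hf : ContinuousOn f (Icc 0 1)) (hg : ContinuousOn g (Icc 0 1))
    (hh : ContinuousOn h (Icc 0 1))
    (hh0 : h 0 = 0) (hh1 : h 1 = 0) (hhpos : ∀ u ∈ Ioo (0:ℝ) 1, 0 < h u)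
    (a b : ℝ) (ha : 0 ≤ a) (hab : a < b) (hb : b ≤ 1)
    (z : ℝ → ℝ)
    (hz : ∀ u ∈ Ioo a b, HasDerivAt z (c * g u - f u - h u / z u ^ α) u)
    (hzpos : ∀ u ∈ Ioo a b, 0 < z u) :
    (∃ la : ℝ, Tendsto z (𝓝[>] a) (𝓝 la)) ∧ (∃ lb : ℝ, Tendsto z (𝓝[<] b) (𝓝 lb)) := by
  -- inclusion of the interval
  have hsub : Ioo a b ⊆ Icc 0 1 := fun u hu => ⟨ha.trans hu.1.le, hu.2.le.trans hb⟩
  have hsub' : Ioo a b ⊆ Ioo 0 1 := fun u hu => ⟨lt_of_le_of_lt ha hu.1, lt_of_lt_of_le hu.2 hb⟩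
  -- bounds for the coefficients
  obtain ⟨M, hM⟩ := isCompact_Icc.exists_bound_of_continuousOn
    ((continuousOn_const.mul hg).sub hf)
  obtain ⟨H, hH⟩ := isCompact_Icc.exists_bound_of_continuousOn hh
  have hM' : ∀ u ∈ Icc (0:ℝ) 1, |c * g u - f u| ≤ M := by
    intro u hu; simpa [Real.norm_eq_abs] using hM u hu
  have hH' : ∀ u ∈ Icc (0:ℝ) 1, |h u| ≤ H := by
    intro u hu; simpa [Real.norm_eq_abs] using hH u hu
  have hM0 : 0 ≤ M := le_trans (abs_nonneg _) (hM' 0 (by norm_num))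
  have hH0 : 0 ≤ H := le_trans (abs_nonneg _) (hH' 0 (by norm_num))
  set K : ℝ := M + H with hK
  have hK0 : 0 ≤ K := add_nonneg hM0 hH0
  -- positivity of the singular term
  have hfrac : ∀ u ∈ Ioo a b, 0 < h u / z u ^ α := by
    intro u hu
    exact div_pos (hhpos u (hsub' hu)) (Real.rpow_pos_of_pos (hzpos u hu) α)
  -- continuity of z on (a,b)
  have hzc : ContinuousOn z (Ioo a b) := fun u hu =>
    (hz u hu).continuousAt.continuousWithinAt
  -- ψ = z - M u is antitone on (a,b)
  set ψ : ℝ → ℝ := fun u => z u - M * u with hψ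
  have hψd : ∀ u ∈ Ioo a b, HasDerivAt ψ ((c * g u - f u - h u / z u ^ α) - M) u := by
    intro u hu
    exact (hz u hu).sub (by simpa using (hasDerivAt_id u).const_mul M)
  have hψanti : AntitoneOn ψ (Ioo a b) := by
    apply antitoneOn_of_hasDerivWithinAt_nonpos (convex_Ioo a b)
      (fun u hu => (hψd u hu).continuousAt.continuousWithinAt)
      (fun u hu => by
        rw [interior_Ioo] at hu ⊢
        exact (hψd u hu).hasDerivWithinAt)
    intro u hu
    rw [interior_Ioo] at hu
    have h1 : c * g u - f u ≤ M := (abs_le.1 (hM' u (hsub hu))).2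
    have h2 := hfrac u hu
    linarith
  -- the midpoint
  set m : ℝ := (a + b) / 2 with hm'
  have hm : m ∈ Ioo a b := ⟨by simp [hm']; linarith, by simp [hm']; linarith⟩
  -- key upper bound near a
  have key : ∀ u ∈ Ioc a m, z u ≤ max (z m) 1 + K * (m - u) := by
    intro u hu
    have hub : u ∈ Ioo a b := ⟨hu.1, lt_of_le_of_lt hu.2 hm.2⟩
    by_contra hlt
    push_neg at hlt
    have hmu : 0 ≤ m - u := by linarith [hu.2]
    have hz1 : 1 < z u := by
      have : (1:ℝ) ≤ max (z m) 1 := le_max_right _ _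
      nlinarith [mul_nonneg hK0 hmu]
    -- the first time z dips to 1 (or m if it never does)
    set S : Set ℝ := Icc u m ∩ z ⁻¹' Iic 1 with hS
    have hIccsub : Icc u m ⊆ Ioo a b := fun t ht =>
      ⟨lt_of_lt_of_le hu.1 ht.1, lt_of_le_of_lt ht.2 hm.2⟩
    have hScl : IsClosed S := by
      apply ContinuousOn.preimage_isClosed_of_isClosed (hzc.mono hIccsub)
        isClosed_Icc isClosed_Iic
    obtain ⟨t₁, ht₁m, ht₁v, ht₁gt⟩ :
        ∃ t₁ ∈ Icc u m, z t₁ ≤ max (z m) 1 ∧ ∀ t ∈ Ioo u t₁, 1 < z t := by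
      rcases S.eq_empty_or_nonempty with hSe | hSne
      · refine ⟨m, ⟨hu.2, le_refl m⟩, le_max_left _ _, fun t ht => ?_⟩
        by_contra hle
        push_neg at hle
        have htS : t ∈ S := ⟨⟨ht.1.le, ht.2.le⟩, hle⟩
        rw [hSe] at htS
        exact htS.elim
      · have hbdd : BddBelow S := ⟨u, fun t ht => ht.1.1⟩
        have hmem := hScl.csInf_mem hSne hbdd
        refine ⟨sInf S, hmem.1, le_trans hmem.2 (le_max_right _ _), fun t ht => ?_⟩
        by_contra hle
        push_neg at hle
        have htS : t ∈ S := ⟨⟨ht.1.le, le_trans ht.2.le hmem.1.2⟩, hle⟩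
        exact absurd (csInf_le hbdd htS) (not_le.2 ht.2)
    -- ζ = z + K t is monotone on [u, t₁]
    set ζ : ℝ → ℝ := fun t => z t + K * t with hζ
    have hIccsub2 : Icc u t₁ ⊆ Ioo a b := fun t ht =>
      hIccsub ⟨ht.1, ht.2.trans ht₁m.2⟩
    have hζmono : MonotoneOn ζ (Icc u t₁) := by
      apply monotoneOn_of_hasDerivWithinAt_nonneg (convex_Icc u t₁)
        (fun t ht => ((hz t (hIccsub2 ht)).continuousAt.continuousWithinAt.add
          (continuousOn_const.mul continuousOn_id t ht)))
        (f' := fun t => (c * g t - f t - h t / z t ^ α) + K)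
        (fun t ht => by
          rw [interior_Icc] at ht
          exact ((hz t (hIccsub2 (Ioo_subset_Icc_self ht))).add
            (by simpa using (hasDerivAt_id t).const_mul K : HasDerivAt (fun y => K * y) K t)).hasDerivWithinAt)
      intro t ht
      rw [interior_Icc] at ht
      have htab : t ∈ Ioo a b := hIccsub2 (Ioo_subset_Icc_self ht)
      have h1 : -M ≤ c * g t - f t := (abs_le.1 (hM' t (hsub htab))).1
      have hz1t : 1 ≤ z t := (ht₁gt t ht).le
      have hrp : 1 ≤ z t ^ α := by
        calc (1:ℝ) = 1 ^ α := (Real.one_rpow α).symm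
        _ ≤ z t ^ α := Real.rpow_le_rpow zero_le_one hz1t hα.le
      have hfr : h t / z t ^ α ≤ H := by
        have h3 : h t / z t ^ α ≤ h t :=
          div_le_self (hhpos t (hsub' htab)).le hrp
        exact h3.trans ((abs_le.1 (hH' t (hsub htab))).2)
      linarith
    have := hζmono ⟨le_refl u, ht₁m.1⟩ ⟨ht₁m.1, le_refl t₁⟩ ht₁m.1
    -- derive contradiction
    simp only [hζ] at this
    have : z u ≤ max (z m) 1 + K * (t₁ - u) := by nlinarith
    have hKle : K * (t₁ - u) ≤ K * (m - u) :=
      mul_le_mul_of_nonneg_left (by linarith [ht₁m.2]) hK0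
    linarith
  -- bounds on ψ
  have habs : ∀ u ∈ Ioo a b, |M * u| ≤ |M| := by
    intro u hu
    rw [abs_mul]
    have hu1 : |u| ≤ 1 := abs_le.2 ⟨by linarith [(hsub hu).1], (hsub hu).2⟩
    nlinarith [abs_nonneg M]
  have hbelow : ∀ u ∈ Ioo a b, -|M| ≤ ψ u := by
    intro u hu
    have h1 := (abs_le.1 (habs u hu)).2
    have := hzpos u hu
    show -|M| ≤ z u - M * u
    linarith
  have habove : ∀ u ∈ Ioo a b, ψ u ≤ max (max (z m) 1 + K * (m - a) + |M|) (ψ m) := by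
    intro u hu
    rcases le_or_gt u m with hum | hum
    · have h1 := key u ⟨hu.1, hum⟩
      have h2 : K * (m - u) ≤ K * (m - a) :=
        mul_le_mul_of_nonneg_left (by linarith [hu.1]) hK0
      have h3 : -(M * u) ≤ |M| := neg_le.1 (abs_le.1 (habs u hu)).1
      refine le_trans ?_ (le_max_left _ _)
      show z u - M * u ≤ _
      linarith
    · exact le_trans (hψanti hm hu hum.le) (le_max_right _ _)
  have hBddA : BddAbove (ψ '' Ioo a b) := by
    refine ⟨max (max (z m) 1 + K * (m - a) + |M|) (ψ m), ?_⟩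
    rintro x ⟨u, hu, rfl⟩
    exact habove u hu
  have hBddB : BddBelow (ψ '' Ioo a b) := by
    refine ⟨-|M|, ?_⟩
    rintro x ⟨u, hu, rfl⟩
    exact hbelow u hu
  have hne : (Ioo a b).Nonempty := ⟨m, hm⟩
  have hlin : Tendsto (fun u : ℝ => M * u) (𝓝[>] a) (𝓝 (M * a)) :=
    ((continuous_const.mul continuous_id).tendsto a).mono_left nhdsWithin_le_nhds
  have hlin' : Tendsto (fun u : ℝ => M * u) (𝓝[<] b) (𝓝 (M * b)) :=
    ((continuous_const.mul continuous_id).tendsto b).mono_left nhdsWithin_le_nhds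
  constructor
  · refine ⟨sSup (ψ '' Ioo a b) + M * a, ?_⟩
    have := (hψanti.tendsto_nhdsWithin_Ioo_right hne hBddA).add hlin
    exact this.congr (fun u => by simp [hψ])
  · refine ⟨sInf (ψ '' Ioo a b) + M * b, ?_⟩
    have := (hψanti.tendsto_nhdsWithin_Ioo_left hne hBddB).add hlin'
    exact this.congr (fun u => by simp [hψ])
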